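/- arXiv:2303.08281 — 4 statements merged into one kernel-verified Lean document; each statement's English description precedes it below -/
import Mathlib

section
/- The Elvis problem admits a minimizer: the infimum of γ_{F₀}(y − x₀) + γ_{F₁}(x₁ − y) over y ∈ Σ is attained at some point of Σ. -/
open Topology Metric


/-- The Elvis problem admits a minimizer on the x-axis Σ. -/
theorem elvis_exists_minimizer (F₀ F₁ : Set (WithLp 2 (ℝ × ℝ)))
    (hne₀ : F₀.Nonempty) (hcl₀ : IsClosed F₀) (hcv₀ : Convex ℝ F₀)
    (hbd₀ : Bornology.IsBounded F₀) (h0₀ : (0 : WithLp 2 (ℝ × ℝ)) ∈ interior F₀)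
    (hne₁ : F₁.Nonempty) (hcl₁ : IsClosed F₁) (hcv₁ : Convex ℝ F₁)
    (hbd₁ : Bornology.IsBounded F₁) (h0₁ : (0 : WithLp 2 (ℝ × ℝ)) ∈ interior F₁)
    (x₀ x₁ : WithLp 2 (ℝ × ℝ)) (hx₀ : x₀.ofLp.2 < 0) (hx₁ : 0 < x₁.ofLp.2) :
    ∃ y : ℝ, ∀ y' : ℝ,
      gauge F₀ ((WithLp.equiv 2 (ℝ × ℝ)).symm (y, 0) - x₀) + gauge F₁ (x₁ - (WithLp.equiv 2 (ℝ × ℝ)).symm (y, 0)) ≤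
        gauge F₀ ((WithLp.equiv 2 (ℝ × ℝ)).symm (y', 0) - x₀) + gauge F₁ (x₁ - (WithLp.equiv 2 (ℝ × ℝ)).symm (y', 0)) := by
  set e := (WithLp.equiv 2 (ℝ × ℝ)).symm with he
  set g : ℝ → ℝ := fun y =>
    gauge F₀ (e (y, 0) - x₀) + gauge F₁ (x₁ - e (y, 0)) with hgdef
  have hnb₀ : F₀ ∈ 𝓝 (0 : WithLp 2 (ℝ × ℝ)) := mem_interior_iff_mem_nhds.mp h0₀
  have hnb₁ : F₁ ∈ 𝓝 (0 : WithLp 2 (ℝ × ℝ)) := mem_interior_iff_mem_nhds.mp h0₁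
  -- continuity of g
  have h1 : Continuous fun y : ℝ => e (y, 0) :=
    (WithLp.prod_continuous_toLp 2 ℝ ℝ).comp (continuous_id.prodMk continuous_const)
  have hg : Continuous g :=
    ((continuous_gauge hcv₀ hnb₀).comp (h1.sub continuous_const)).add
      ((continuous_gauge hcv₁ hnb₁).comp (continuous_const.sub h1))
  -- bound F₀ in a ball
  obtain ⟨R, hR0, hRsub⟩ := hbd₀.subset_ball_lt 0 0
  -- coercive lower bound for gauge F₀
  have hlow : ∀ v : WithLp 2 (ℝ × ℝ), ‖v‖ / R ≤ gauge F₀ v := by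
    intro v
    have := gauge_mono (absorbent_nhds_zero hnb₀) hRsub v
    rwa [gauge_ball hR0.le] at this
  -- norm of e (y,0) is |y|
  have hnorm : ∀ y : ℝ, ‖e (y, 0)‖ = |y| := by
    intro y
    rw [WithLp.prod_norm_eq_of_L2]
    simp [he, Real.sqrt_sq_eq_abs]
  have hcoerc : ∀ y : ℝ, (|y| - ‖x₀‖) / R ≤ g y := by
    intro y
    have h2 : |y| - ‖x₀‖ ≤ ‖e (y, 0) - x₀‖ := by
      have := norm_sub_norm_le (e (y, 0)) x₀
      rw [hnorm] at this; linarith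
    have h3 : (|y| - ‖x₀‖) / R ≤ ‖e (y, 0) - x₀‖ / R :=
      div_le_div_of_nonneg_right h2 hR0.le |>.trans_eq rfl
    have h4 := hlow (e (y, 0) - x₀)
    have h5 : (0:ℝ) ≤ gauge F₁ (x₁ - e (y, 0)) := gauge_nonneg _
    simp only [hgdef]; linarith
  set M : ℝ := ‖x₀‖ + R * g 0 + R with hM
  have hg0 : 0 ≤ g 0 := add_nonneg (gauge_nonneg _) (gauge_nonneg _)
  have hM0 : 0 ≤ M := by positivity
  have hbig : ∀ y : ℝ, M < |y| → g 0 < g y := by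
    intro y hy
    have := hcoerc y
    have h7 : |y| - ‖x₀‖ ≤ g y * R := (div_le_iff₀ hR0).mp this
    have h8 : R * (g 0 + 1) < R * g y := by
      have h9 : ‖x₀‖ + R * g 0 + R < |y| := hy
      nlinarith
    have := lt_of_mul_lt_mul_left h8 hR0.le
    linarith
  obtain ⟨y, hyI, hymin⟩ :=
    (isCompact_Icc (a := -M) (b := M)).exists_isMinOn ⟨0, by constructor <;> linarith⟩
      hg.continuousOn
  refine ⟨y, fun y' => ?_⟩
  by_cases hy' : y' ∈ Set.Icc (-M) M
  · exact hymin hy'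
  · have h8 : M < |y'| := by
      rcases abs_cases y' with ⟨h, _⟩ | ⟨h, _⟩ <;>
        [skip; skip] <;> simp only [Set.mem_Icc, not_and_or, not_le] at hy' <;>
        rcases hy' with h' | h' <;> linarith
    have h9 : g y ≤ g 0 := hymin ⟨by linarith, by linarith⟩
    exact le_of_lt (lt_of_le_of_lt h9 (hbig y' h8))
end

section
/- (Sufficiency of generalized Snell's law) If y ∈ Σ and there exist ζ₀ ∈ ∂γ_{F₀}(y − x₀) and ζ₁ with −ζ₁ ∈ ∂γ_{F₁}(x₁ − y) such that ζ₀ + ζ₁ is orthogonal to Σ (its first coordinate vanishes), then y minimizes γ_{F₀}(y' − x₀) + γ_{F₁}(x₁ − y') over y' ∈ Σ. -/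
open RealInnerProductSpace

/-- Sufficiency of the generalized Snell law: if `ζ₀ ∈ ∂γ_{F₀}(y − x₀)`,
`−ζ₁ ∈ ∂γ_{F₁}(x₁ − y)` and the first coordinate of `ζ₀ + ζ₁` vanishes, then `y ∈ Σ`
minimizes the Elvis objective over Σ. -/
theorem elvis_snell_sufficient (F₀ F₁ : Set (WithLp 2 (ℝ × ℝ)))
    (hne₀ : F₀.Nonempty) (hcl₀ : IsClosed F₀) (hcv₀ : Convex ℝ F₀)
    (hbd₀ : Bornology.IsBounded F₀) (h0₀ : (0 : WithLp 2 (ℝ × ℝ)) ∈ interior F₀)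
    (hne₁ : F₁.Nonempty) (hcl₁ : IsClosed F₁) (hcv₁ : Convex ℝ F₁)
    (hbd₁ : Bornology.IsBounded F₁) (h0₁ : (0 : WithLp 2 (ℝ × ℝ)) ∈ interior F₁)
    (x₀ x₁ : WithLp 2 (ℝ × ℝ)) (hx₀ : x₀.ofLp.2 < 0) (hx₁ : 0 < x₁.ofLp.2)
    (y : WithLp 2 (ℝ × ℝ)) (hy : y.ofLp.2 = 0) (ζ₀ ζ₁ : WithLp 2 (ℝ × ℝ))
    (hζ₀ : ∀ u : WithLp 2 (ℝ × ℝ), gauge F₀ (y - x₀) + ⟪ζ₀, u - (y - x₀)⟫ ≤ gauge F₀ u)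
    (hζ₁ : ∀ u : WithLp 2 (ℝ × ℝ), gauge F₁ (x₁ - y) + ⟪-ζ₁, u - (x₁ - y)⟫ ≤ gauge F₁ u)
    (hsnell : (ζ₀ + ζ₁).ofLp.1 = 0) :
    ∀ y' : WithLp 2 (ℝ × ℝ), y'.ofLp.2 = 0 →
      gauge F₀ (y - x₀) + gauge F₁ (x₁ - y) ≤ gauge F₀ (y' - x₀) + gauge F₁ (x₁ - y') := by
  intro y' hy'
  have h0 := hζ₀ (y' - x₀)
  have h1 := hζ₁ (x₁ - y')
  have key : ⟪ζ₀, (y' - x₀) - (y - x₀)⟫ + ⟪-ζ₁, (x₁ - y') - (x₁ - y)⟫ = 0 := by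
    have e0 : (y' - x₀) - (y - x₀) = y' - y := by abel
    have e1 : (x₁ - y') - (x₁ - y) = -(y' - y) := by abel
    rw [e0, e1, inner_neg_neg]
    rw [← inner_add_left]
    have : ⟪ζ₀ + ζ₁, y' - y⟫ = (ζ₀ + ζ₁).ofLp.1 * (y' - y).ofLp.1 + (ζ₀ + ζ₁).ofLp.2 * (y' - y).ofLp.2 := by
      rw [WithLp.prod_inner_apply, real_inner_eq_re_inner, real_inner_eq_re_inner]; simp [mul_comm]
    rw [this, hsnell]
    have : (y' - y).ofLp.2 = 0 := by
      show y'.ofLp.2 - y.ofLp.2 = 0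
      rw [hy', hy]; ring
    rw [this]; ring
  linarith
end

section
/- (Necessity of generalized Snell's law) If y ∈ Σ minimizes γ_{F₀}(y' − x₀) + γ_{F₁}(x₁ − y') over y' ∈ Σ, then there exist ζ₀ ∈ ∂γ_{F₀}(y − x₀) and ζ₁ with −ζ₁ ∈ ∂γ_{F₁}(x₁ − y) such that the first coordinate of ζ₀ + ζ₁ is zero. -/
open RealInnerProductSpace


open RealInnerProductSpace Set

noncomputable section ElvisAux

abbrev EE := WithLp 2 (ℝ × ℝ)

def ee₁ : EE := (WithLp.equiv 2 (ℝ × ℝ)).symm (1, 0)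

lemma ee₁_fst : (ee₁ : EE).ofLp.1 = 1 := rfl
lemma ee₁_snd : (ee₁ : EE).ofLp.2 = 0 := rfl

lemma gauge_slice_convexOn {F : Set EE} (hcv : Convex ℝ F) (habs : Absorbent ℝ F)
    (c e : EE) : ConvexOn ℝ univ (fun t : ℝ => gauge F (c + t • e)) := by
  refine ⟨convex_univ, fun a _ b _ l m hl hm hlm => ?_⟩
  have key : c + (l • a + m • b) • e = l • (c + a • e) + m • (c + b • e) := by
    have hm1 : m = 1 - l := by linarith
    subst hm1
    rw [smul_eq_mul, smul_eq_mul]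
    module
  simp only [key]
  calc gauge F (l • (c + a • e) + m • (c + b • e))
      ≤ gauge F (l • (c + a • e)) + gauge F (m • (c + b • e)) := gauge_add_le hcv habs _ _
    _ = l • gauge F (c + a • e) + m • gauge F (c + b • e) := by
        rw [gauge_smul_of_nonneg hl, gauge_smul_of_nonneg hm]

lemma elvis_lift {F : Set EE} (hcv : Convex ℝ F) (habs : Absorbent ℝ F)
    (p : EE) (hp : p.ofLp.2 ≠ 0) (d : ℝ)
    (hd : ∀ s : ℝ, gauge F p + d * s ≤ gauge F (p + s • ee₁)) :
    ∃ ζ : EE, ζ.ofLp.1 = d ∧ ∀ u : EE, gauge F p + ⟪ζ, u - p⟫ ≤ gauge F u := by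
  have claim : ∀ a b : ℝ, a * gauge F p + b * d ≤ gauge F (a • p + b • ee₁) := by
    intro a b
    rcases le_or_gt a 1 with ha | ha
    · have hrw : p + b • ee₁ = (a • p + b • ee₁) + (1 - a) • p := by module
      have h1 : gauge F (p + b • ee₁) ≤ gauge F (a • p + b • ee₁) + (1 - a) * gauge F p := by
        rw [hrw]
        calc gauge F ((a • p + b • ee₁) + (1 - a) • p)
            ≤ gauge F (a • p + b • ee₁) + gauge F ((1 - a) • p) := gauge_add_le hcv habs _ _
          _ = gauge F (a • p + b • ee₁) + (1 - a) * gauge F p := by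
              rw [gauge_smul_of_nonneg (by linarith : (0:ℝ) ≤ 1 - a)]; rfl
      have h2 := hd b
      linarith
    · have ha0 : (0:ℝ) < a := by linarith
      have hrw : a • p + b • ee₁ = a • (p + (b / a) • ee₁) := by
        rw [smul_add, smul_smul, mul_div_cancel₀ _ ha0.ne']
      rw [hrw, gauge_smul_of_nonneg ha0.le, smul_eq_mul]
      have h2 := hd (b / a)
      have := mul_le_mul_of_nonneg_left h2 ha0.le
      calc a * gauge F p + b * d = a * (gauge F p + d * (b / a)) := by
            field_simp
        _ ≤ a * gauge F (p + (b / a) • ee₁) := this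
  refine ⟨(WithLp.equiv 2 (ℝ × ℝ)).symm (d, (gauge F p - d * p.ofLp.1) / p.ofLp.2), rfl, fun u => ?_⟩
  set ζ : EE := (WithLp.equiv 2 (ℝ × ℝ)).symm (d, (gauge F p - d * p.ofLp.1) / p.ofLp.2) with hζ
  have hζ1 : ζ.ofLp.1 = d := rfl
  have hζ2 : ζ.ofLp.2 = (gauge F p - d * p.ofLp.1) / p.ofLp.2 := rfl
  set a : ℝ := u.ofLp.2 / p.ofLp.2 with haa
  set b : ℝ := u.ofLp.1 - p.ofLp.1 * u.ofLp.2 / p.ofLp.2 with hbb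
  have hu : a • p + b • ee₁ = u := by
    apply (WithLp.equiv 2 (ℝ × ℝ)).injective
    apply Prod.ext
    · simp only [WithLp.equiv_apply, WithLp.ofLp_add, WithLp.ofLp_smul, Prod.fst_add, Prod.smul_fst, smul_eq_mul,
        ee₁_fst, haa, hbb]
      field_simp
      ring
    · simp only [WithLp.equiv_apply, WithLp.ofLp_add, WithLp.ofLp_smul, Prod.snd_add, Prod.smul_snd, smul_eq_mul,
        ee₁_snd, haa, mul_zero, add_zero]
      field_simp
  have hinner : ∀ v : EE, ⟪ζ, v⟫ = d * v.ofLp.1 + (gauge F p - d * p.ofLp.1) / p.ofLp.2 * v.ofLp.2 := by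
    intro v
    rw [WithLp.prod_inner_apply]
    simp [-WithLp.ofLp_fst, -WithLp.ofLp_snd, hζ1, hζ2, RCLike.inner_apply]; ring
  have hζu : ⟪ζ, u⟫ = a * gauge F p + b * d := by
    rw [hinner, haa, hbb]
    field_simp [haa, hbb]
    ring
  have hζp : ⟪ζ, p⟫ = gauge F p := by
    rw [hinner]
    field_simp
    ring
  have hsub : ⟪ζ, u - p⟫ = ⟪ζ, u⟫ - ⟪ζ, p⟫ := inner_sub_right ζ u p
  rw [hsub, hζu, hζp]
  have := claim a b
  rw [hu] at this
  linarith

end ElvisAux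


open Set

lemma elvis_oneDim {g₀ g₁ : ℝ → ℝ} (h₀ : ConvexOn ℝ univ g₀) (h₁ : ConvexOn ℝ univ g₁)
    (t₀ : ℝ) (hmin : ∀ t, g₀ t₀ + g₁ t₀ ≤ g₀ t + g₁ t) :
    ∃ d : ℝ, (∀ s, g₀ t₀ + d * s ≤ g₀ (t₀ + s)) ∧ (∀ s, g₁ t₀ + (-d) * s ≤ g₁ (t₀ + s)) := by
  have mono : ∀ (g : ℝ → ℝ), ConvexOn ℝ univ g → ∀ s s' : ℝ, s ≠ 0 → s' ≠ 0 → s ≤ s' →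
      (g (t₀ + s) - g t₀) / s ≤ (g (t₀ + s') - g t₀) / s' := by
    intro g hg s s' hs hs' hss
    have := hg.secant_mono (mem_univ t₀) (mem_univ (t₀ + s)) (mem_univ (t₀ + s'))
      (by simpa using hs) (by simpa using hs') (by linarith)
    simpa using this
  set q₀ : ℝ → ℝ := fun s => (g₀ (t₀ + s) - g₀ t₀) / s with hq₀
  set q₁ : ℝ → ℝ := fun s => (g₁ (t₀ + s) - g₁ t₀) / s with hq₁
  have mono₀ : ∀ s s' : ℝ, s ≠ 0 → s' ≠ 0 → s ≤ s' → q₀ s ≤ q₀ s' := mono g₀ h₀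
  have mono₁ : ∀ s s' : ℝ, s ≠ 0 → s' ≠ 0 → s ≤ s' → q₁ s ≤ q₁ s' := mono g₁ h₁
  have spos : ∀ m : ℝ, 0 < m → 0 ≤ q₀ m + q₁ m := by
    intro m hm
    have h := hmin (t₀ + m)
    have : q₀ m + q₁ m = ((g₀ (t₀ + m) - g₀ t₀) + (g₁ (t₀ + m) - g₁ t₀)) / m :=
      by simp only [hq₀, hq₁]; ring
    rw [this]
    apply div_nonneg (by linarith) hm.le
  have sneg : ∀ m : ℝ, m < 0 → q₀ m + q₁ m ≤ 0 := by
    intro m hm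
    have h := hmin (t₀ + m)
    have heq : q₀ m + q₁ m = ((g₀ (t₀ + m) - g₀ t₀) + (g₁ (t₀ + m) - g₁ t₀)) / m :=
      by simp only [hq₀, hq₁]; ring
    rw [heq]
    exact div_nonpos_of_nonneg_of_nonpos (by linarith) hm.le
  set D₀ : ℝ := sSup (q₀ '' Iio 0) with hD₀
  set D₁ : ℝ := sInf (q₁ '' Ioi 0) with hD₁
  have bdd₀ : BddAbove (q₀ '' Iio 0) := by
    refine ⟨q₀ 1, ?_⟩
    rintro x ⟨s, hs, rfl⟩
    exact mono₀ s 1 (ne_of_lt hs) one_ne_zero (by linarith [mem_Iio.1 hs])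
  have ne₀ : (q₀ '' Iio 0).Nonempty := ⟨q₀ (-1), ⟨-1, by norm_num, rfl⟩⟩
  have bdd₁ : BddBelow (q₁ '' Ioi 0) := by
    refine ⟨q₁ (-1), ?_⟩
    rintro x ⟨s, hs, rfl⟩
    exact mono₁ (-1) s (by norm_num) (ne_of_gt hs) (by linarith [mem_Ioi.1 hs])
  have ne₁ : (q₁ '' Ioi 0).Nonempty := ⟨q₁ 1, ⟨1, by norm_num, rfl⟩⟩
  have F1 : ∀ s : ℝ, s < 0 → q₀ s ≤ D₀ := fun s hs => le_csSup bdd₀ ⟨s, hs, rfl⟩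
  have F2 : ∀ s : ℝ, 0 < s → D₀ ≤ q₀ s := by
    intro s hs
    apply csSup_le ne₀
    rintro x ⟨s', hs', rfl⟩
    exact mono₀ s' s (ne_of_lt hs') (ne_of_gt hs) (by linarith [mem_Iio.1 hs'])
  have F3 : ∀ s : ℝ, 0 < s → D₁ ≤ q₁ s := fun s hs => csInf_le bdd₁ ⟨s, hs, rfl⟩
  have F4 : ∀ s : ℝ, s < 0 → q₁ s ≤ D₁ := by
    intro s hs
    apply le_csInf ne₁
    rintro x ⟨s', hs', rfl⟩
    exact mono₁ s s' (ne_of_lt hs) (ne_of_gt hs') (by linarith [mem_Ioi.1 hs'])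
  have F5 : ∀ s : ℝ, 0 < s → -D₁ ≤ q₀ s := by
    intro s hs
    have : -q₀ s ≤ D₁ := by
      apply le_csInf ne₁
      rintro x ⟨s', hs', rfl⟩
      have hs'0 : 0 < s' := mem_Ioi.1 hs'
      set m : ℝ := min s s' with hm
      have hm0 : 0 < m := lt_min hs hs'0
      have h1 : q₀ m ≤ q₀ s := mono₀ m s hm0.ne' hs.ne' (min_le_left _ _)
      have h2 : q₁ m ≤ q₁ s' := mono₁ m s' hm0.ne' hs'0.ne' (min_le_right _ _)
      have h3 := spos m hm0
      linarith
    linarith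
  have F6 : ∀ s : ℝ, s < 0 → D₀ ≤ -q₁ s := by
    intro s hs
    apply csSup_le ne₀
    rintro x ⟨s', hs', rfl⟩
    have hs'0 : s' < 0 := mem_Iio.1 hs'
    set M : ℝ := max s s' with hM
    have hM0 : M < 0 := max_lt hs hs'0
    have h1 : q₀ s' ≤ q₀ M := mono₀ s' M hs'0.ne hM0.ne (le_max_right _ _)
    have h2 : q₁ s ≤ q₁ M := mono₁ s M hs.ne hM0.ne (le_max_left _ _)
    have h3 := sneg M hM0
    linarith
  refine ⟨max D₀ (-D₁), ?_, ?_⟩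
  · intro s
    rcases lt_trichotomy s 0 with hs | rfl | hs
    · have h1 : q₀ s ≤ max D₀ (-D₁) := (F1 s hs).trans (le_max_left _ _)
      have h2 : q₀ s * s = g₀ (t₀ + s) - g₀ t₀ := div_mul_cancel₀ _ hs.ne
      nlinarith [mul_le_mul_of_nonpos_right h1 hs.le]
    · simp
    · have h1 : max D₀ (-D₁) ≤ q₀ s := max_le (F2 s hs) (F5 s hs)
      have h2 : q₀ s * s = g₀ (t₀ + s) - g₀ t₀ := div_mul_cancel₀ _ hs.ne'
      nlinarith [mul_le_mul_of_nonneg_right h1 hs.le]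
  · intro s
    rcases lt_trichotomy s 0 with hs | rfl | hs
    · have h1 : q₁ s ≤ -(max D₀ (-D₁)) := by
        have ha : max D₀ (-D₁) ≤ -q₁ s :=
          max_le (F6 s hs) (by have := F4 s hs; linarith)
        linarith
      have h2 : q₁ s * s = g₁ (t₀ + s) - g₁ t₀ := div_mul_cancel₀ _ hs.ne
      nlinarith [mul_le_mul_of_nonpos_right h1 hs.le]
    · simp
    · have h1 : -(max D₀ (-D₁)) ≤ q₁ s := by
        have ha : -D₁ ≤ max D₀ (-D₁) := le_max_right _ _
        have := F3 s hs
        linarith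
      have h2 : q₁ s * s = g₁ (t₀ + s) - g₁ t₀ := div_mul_cancel₀ _ hs.ne'
      nlinarith [mul_le_mul_of_nonneg_right h1 hs.le]

/-- Necessity of the generalized Snell law: if `y ∈ Σ` minimizes the Elvis objective over Σ,
then there exist `ζ₀ ∈ ∂γ_{F₀}(y − x₀)` and `ζ₁` with `−ζ₁ ∈ ∂γ_{F₁}(x₁ − y)` such that the
first coordinate of `ζ₀ + ζ₁` is zero. -/
theorem elvis_snell_necessary (F₀ F₁ : Set (WithLp 2 (ℝ × ℝ)))
    (hne₀ : F₀.Nonempty) (hcl₀ : IsClosed F₀) (hcv₀ : Convex ℝ F₀)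
    (hbd₀ : Bornology.IsBounded F₀) (h0₀ : (0 : WithLp 2 (ℝ × ℝ)) ∈ interior F₀)
    (hne₁ : F₁.Nonempty) (hcl₁ : IsClosed F₁) (hcv₁ : Convex ℝ F₁)
    (hbd₁ : Bornology.IsBounded F₁) (h0₁ : (0 : WithLp 2 (ℝ × ℝ)) ∈ interior F₁)
    (x₀ x₁ : WithLp 2 (ℝ × ℝ)) (hx₀ : x₀.ofLp.2 < 0) (hx₁ : 0 < x₁.ofLp.2)
    (y : WithLp 2 (ℝ × ℝ)) (hy : y.ofLp.2 = 0)
    (hmin : ∀ y' : WithLp 2 (ℝ × ℝ), y'.ofLp.2 = 0 →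
      gauge F₀ (y - x₀) + gauge F₁ (x₁ - y) ≤ gauge F₀ (y' - x₀) + gauge F₁ (x₁ - y')) :
    ∃ ζ₀ ζ₁ : WithLp 2 (ℝ × ℝ),
      (∀ u : WithLp 2 (ℝ × ℝ), gauge F₀ (y - x₀) + ⟪ζ₀, u - (y - x₀)⟫ ≤ gauge F₀ u) ∧
      (∀ u : WithLp 2 (ℝ × ℝ), gauge F₁ (x₁ - y) + ⟪-ζ₁, u - (x₁ - y)⟫ ≤ gauge F₁ u) ∧
      (ζ₀ + ζ₁).ofLp.1 = 0 := by
  have habs₀ : Absorbent ℝ F₀ := absorbent_nhds_zero (mem_interior_iff_mem_nhds.1 h0₀)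
  have habs₁ : Absorbent ℝ F₁ := absorbent_nhds_zero (mem_interior_iff_mem_nhds.1 h0₁)
  set t₀ : ℝ := y.ofLp.1 with ht₀
  have hy' : y = t₀ • ee₁ := by
    apply (WithLp.equiv 2 (ℝ × ℝ)).injective
    apply Prod.ext
    · simp [-WithLp.ofLp_fst, WithLp.smul_fst, ee₁_fst, ht₀]
    · simp [-WithLp.ofLp_snd, WithLp.smul_snd, ee₁_snd, hy]
  set g₀ : ℝ → ℝ := fun t => gauge F₀ (-x₀ + t • ee₁) with hg₀
  set g₁ : ℝ → ℝ := fun t => gauge F₁ (x₁ + t • (-ee₁)) with hg₁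
  have e2 : ∀ t : ℝ, (t • ee₁ : EE) - x₀ = -x₀ + t • ee₁ := fun t => by module
  have e3 : ∀ t : ℝ, x₁ - (t • ee₁ : EE) = x₁ + t • (-ee₁) := fun t => by module
  have e0 : y - x₀ = -x₀ + t₀ • ee₁ := by rw [hy']; exact e2 t₀
  have e1 : x₁ - y = x₁ + t₀ • (-ee₁) := by rw [hy']; exact e3 t₀
  have M : ∀ t : ℝ, g₀ t₀ + g₁ t₀ ≤ g₀ t + g₁ t := by
    intro t
    have h2 : ((t • ee₁ : EE)).ofLp.2 = 0 := by simp [-WithLp.ofLp_snd, WithLp.smul_snd, ee₁_snd]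
    have := hmin (t • ee₁) h2
    rw [e2 t, e3 t, e0, e1] at this
    exact this
  have hcx₀ : ConvexOn ℝ Set.univ g₀ := gauge_slice_convexOn hcv₀ habs₀ (-x₀) ee₁
  have hcx₁ : ConvexOn ℝ Set.univ g₁ := gauge_slice_convexOn hcv₁ habs₁ x₁ (-ee₁)
  obtain ⟨d, H0, H1⟩ := elvis_oneDim hcx₀ hcx₁ t₀ M
  have hp₀ : (y - x₀).ofLp.2 ≠ 0 := by
    rw [WithLp.ofLp_sub, Prod.snd_sub, hy]; intro h; rw [zero_sub, neg_eq_zero] at h; exact hx₀.ne h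
  have hp₁ : (x₁ - y).ofLp.2 ≠ 0 := by
    rw [WithLp.ofLp_sub, Prod.snd_sub, hy, sub_zero]; exact hx₁.ne'
  have hd₀ : ∀ s : ℝ, gauge F₀ (y - x₀) + d * s ≤ gauge F₀ ((y - x₀) + s • ee₁) := by
    intro s
    have harg : (y - x₀) + s • ee₁ = -x₀ + (t₀ + s) • ee₁ := by rw [e0]; module
    rw [harg, e0]
    exact H0 s
  have hd₁ : ∀ s : ℝ, gauge F₁ (x₁ - y) + d * s ≤ gauge F₁ ((x₁ - y) + s • ee₁) := by
    intro s
    have harg : (x₁ - y) + s • ee₁ = x₁ + (t₀ + -s) • (-ee₁) := by rw [e1]; module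
    have := H1 (-s)
    rw [harg, e1]
    calc gauge F₁ (x₁ + t₀ • (-ee₁)) + d * s
        = g₁ t₀ + (-d) * (-s) := by rw [hg₁]; ring_nf
      _ ≤ g₁ (t₀ + -s) := this
      _ = gauge F₁ (x₁ + (t₀ + -s) • (-ee₁)) := rfl
  obtain ⟨ζ₀, hζ₀1, hζ₀⟩ := elvis_lift hcv₀ habs₀ (y - x₀) hp₀ d hd₀
  obtain ⟨η, hη1, hη⟩ := elvis_lift hcv₁ habs₁ (x₁ - y) hp₁ d hd₁
  refine ⟨ζ₀, -η, hζ₀, by simpa using hη, ?_⟩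
  rw [WithLp.ofLp_add, Prod.fst_add, hζ₀1, WithLp.ofLp_neg, Prod.fst_neg, hη1]
  ring
end

section
/- (Classical Snell's law) Let F₀ = r₀·B and F₁ = r₁·B be balls with r₀, r₁ > 0. If y ∈ Σ minimizes |y − x₀|/r₀ + |x₁ − y|/r₁ over Σ, then sin(θ₀)/r₀ = sin(θ₁)/r₁, where θ₀ and θ₁ are the angles that y − x₀ and x₁ − y make with the vertical direction, i.e. sin(θᵢ) is the ratio of the horizontal component to the norm of the corresponding vector. -/
lemma snell_sqrt_deriv (a b t : ℝ) (hb : b ≠ 0) :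
    HasDerivAt (fun t => Real.sqrt ((t - a) ^ 2 + b ^ 2))
      ((t - a) / Real.sqrt ((t - a) ^ 2 + b ^ 2)) t := by
  have hpos : 0 < (t - a) ^ 2 + b ^ 2 := by positivity
  have h1 : HasDerivAt (fun t : ℝ => (t - a) ^ 2 + b ^ 2) (2 * (t - a)) t := by
    simpa using (((hasDerivAt_id t).sub_const a).pow 2).add_const (b ^ 2)
  have h2 := (Real.hasDerivAt_sqrt hpos.ne').comp t h1
  have hs : Real.sqrt ((t - a) ^ 2 + b ^ 2) ≠ 0 := by positivity
  refine h2.congr_deriv ?_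
  field_simp

/-- Classical Snell's law: if `y ∈ Σ` minimizes `‖y − x₀‖/r₀ + ‖x₁ − y‖/r₁` over the x-axis,
then `sin θ₀ / r₀ = sin θ₁ / r₁`, where `sin θᵢ` is the ratio of the horizontal component
to the norm of the corresponding vector. -/
theorem classical_snell (r₀ r₁ : ℝ) (hr₀ : 0 < r₀) (hr₁ : 0 < r₁)
    (x₀ x₁ : WithLp 2 (ℝ × ℝ)) (hx₀ : x₀.ofLp.2 < 0) (hx₁ : 0 < x₁.ofLp.2)
    (y : WithLp 2 (ℝ × ℝ)) (hy : y.ofLp.2 = 0)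
    (hmin : ∀ y' : WithLp 2 (ℝ × ℝ), y'.ofLp.2 = 0 →
      ‖y - x₀‖ / r₀ + ‖x₁ - y‖ / r₁ ≤ ‖y' - x₀‖ / r₀ + ‖x₁ - y'‖ / r₁) :
    ((y - x₀).ofLp.1 / ‖y - x₀‖) / r₀ = ((x₁ - y).ofLp.1 / ‖x₁ - y‖) / r₁ := by
  set a := x₀.ofLp.1
  set b := x₀.ofLp.2
  set c := x₁.ofLp.1
  set d := x₁.ofLp.2
  have hb : b ≠ 0 := ne_of_lt hx₀
  have hd : d ≠ 0 := ne_of_gt hx₁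
  set g : ℝ → ℝ := fun t =>
    Real.sqrt ((t - a) ^ 2 + b ^ 2) / r₀ + Real.sqrt ((t - c) ^ 2 + d ^ 2) / r₁ with hg
  have hn0 : ∀ t : ℝ, ∀ z : WithLp 2 (ℝ × ℝ), z.ofLp.2 = 0 →
      ‖z - x₀‖ = Real.sqrt ((z.ofLp.1 - a) ^ 2 + b ^ 2) := by
    intro t z hz
    rw [WithLp.prod_norm_eq_of_L2]
    have h1 : (z - x₀).fst = z.ofLp.1 - a := rfl
    have h2 : (z - x₀).snd = z.ofLp.2 - b := rfl
    rw [h1, h2, hz, Real.norm_eq_abs, Real.norm_eq_abs, sq_abs, sq_abs, zero_sub, neg_sq]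
  have hn1 : ∀ z : WithLp 2 (ℝ × ℝ), z.ofLp.2 = 0 →
      ‖x₁ - z‖ = Real.sqrt ((z.ofLp.1 - c) ^ 2 + d ^ 2) := by
    intro z hz
    rw [WithLp.prod_norm_eq_of_L2]
    have h1 : (x₁ - z).fst = c - z.ofLp.1 := rfl
    have h2 : (x₁ - z).snd = d - z.ofLp.2 := rfl
    rw [h1, h2, hz, Real.norm_eq_abs, Real.norm_eq_abs, sq_abs, sq_abs, sub_zero]
    congr 2
    ring
  have hmin' : IsLocalMin g y.ofLp.1 := by
    apply IsMinOn.isLocalMin _ (by simp : Set.univ ∈ nhds y.ofLp.1)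
    intro t _
    have := hmin (WithLp.toLp 2 (t, 0)) rfl
    rw [hn0 y.ofLp.1 y hy, hn1 y hy] at this
    rw [hn0 t _ rfl, hn1 _ rfl] at this
    simpa [g] using this
  have hD : HasDerivAt g
      ((y.ofLp.1 - a) / Real.sqrt ((y.ofLp.1 - a) ^ 2 + b ^ 2) / r₀ +
       (y.ofLp.1 - c) / Real.sqrt ((y.ofLp.1 - c) ^ 2 + d ^ 2) / r₁) y.ofLp.1 :=
    ((snell_sqrt_deriv a b y.ofLp.1 hb).div_const r₀).add
      ((snell_sqrt_deriv c d y.ofLp.1 hd).div_const r₁)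
  have h0 := hmin'.hasDerivAt_eq_zero hD
  have e0 : ‖y - x₀‖ = Real.sqrt ((y.ofLp.1 - a) ^ 2 + b ^ 2) := hn0 y.ofLp.1 y hy
  have e1 : ‖x₁ - y‖ = Real.sqrt ((y.ofLp.1 - c) ^ 2 + d ^ 2) := hn1 y hy
  have f0 : (y - x₀).ofLp.1 = y.ofLp.1 - a := rfl
  have f1 : (x₁ - y).ofLp.1 = c - y.ofLp.1 := rfl
  rw [e0, e1, f0, f1]
  have : (c - y.ofLp.1) / Real.sqrt ((y.ofLp.1 - c) ^ 2 + d ^ 2) / r₁ =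
      -((y.ofLp.1 - c) / Real.sqrt ((y.ofLp.1 - c) ^ 2 + d ^ 2) / r₁) := by ring_nf
  rw [this]
  linarith [h0]
end
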